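/- Inquisitive normal form theorem: for any formula φ of L with resolutions R(φ) = {α₁,…,αₙ}, φ is InqI-equivalent to α₁⩾⋯⩾αₙ, i.e., for every intuitionistic Kripke model M and team t: M,t ⊨ φ if and only if M,t ⊨ αᵢ for some i ≤ n. -/

import Mathlib

/-- Formulas of the language L: atoms, ⊥, ∧, ∨, →, and inquisitive disjunction ⩾. -/
inductive Formula (P : Type) : Type
  | atom : P → Formula P
  | bot  : Formula P
  | and  : Formula P → Formula P → Formula P
  | or   : Formula P → Formula P → Formula P
  | impl : Formula P → Formula P → Formula P
  | iorr : Formula P → Formula P → Formula P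

namespace Formula

/-- Negation ¬φ := φ → ⊥. -/
def neg {P : Type} (φ : Formula P) : Formula P := Formula.impl φ Formula.bot

/-- Polar question ?φ := φ ⩾ ¬φ. -/
def question {P : Type} (φ : Formula P) : Formula P := Formula.iorr φ φ.neg

/-- A standard formula contains no occurrence of inquisitive disjunction ⩾. -/
def standard {P : Type} : Formula P → Prop
  | atom _ => True
  | bot => True
  | and φ ψ => φ.standard ∧ ψ.standard
  | or φ ψ => φ.standard ∧ ψ.standard
  | impl φ ψ => φ.standard ∧ ψ.standard
  | iorr _ _ => False

end Formula

/-- An intuitionistic Kripke model: a partially ordered set of worlds with a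
persistent valuation. -/
structure KripkeModel (P : Type) where
  W : Type
  R : W → W → Prop
  refl : ∀ w, R w w
  antisymm : ∀ w v, R w v → R v w → w = v
  trans : ∀ w v u, R w v → R v u → R w u
  V : W → P → Prop
  persistent : ∀ w v p, R w v → V w p → V v p

/-- R[t], the up-set generated by a team t. -/
def KripkeModel.upset {P : Type} (M : KripkeModel P) (t : Set M.W) : Set M.W :=
  {v | ∃ w ∈ t, M.R w v}

/-- The support relation M,t ⊨ φ between teams and formulas. -/
def support {P : Type} (M : KripkeModel P) : Formula P → Set M.W → Prop
  | .atom p, t => ∀ w ∈ t, M.V w p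
  | .bot, t => t = ∅
  | .and φ ψ, t => support M φ t ∧ support M ψ t
  | .or φ ψ, t => ∃ t₁ t₂, t = t₁ ∪ t₂ ∧ support M φ t₁ ∧ support M ψ t₂
  | .impl φ ψ, t => ∀ t', t' ⊆ M.upset t → support M φ t' → support M ψ t'
  | .iorr φ ψ, t => support M φ t ∨ support M ψ t

/-- Truth at a world: M,w ⊨ φ iff M,{w} ⊨ φ. -/
def truth {P : Type} (M : KripkeModel P) (w : M.W) (φ : Formula P) : Prop :=
  support M φ {w}

/-- A formula is truth-conditional if support at a team amounts to truth at each world. -/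
def truthConditional {P : Type} (φ : Formula P) : Prop :=
  ∀ (M : KripkeModel P) (t : Set M.W), support M φ t ↔ ∀ w ∈ t, truth M w φ

/-- The partial truth-value function: `tvalIs M w φ b` says T(w,φ) is defined with value b
(b = true for value 1, i.e. M,w ⊨ φ; b = false for value 0, i.e. M,w ⊨ ¬φ). -/
def tvalIs {P : Type} (M : KripkeModel P) (w : M.W) (φ : Formula P) : Bool → Prop
  | true => truth M w φ
  | false => truth M w φ.neg

/-- Big conjunction of a list of formulas (empty conjunction is the verum ⊥→⊥). -/
def bigConj {P : Type} : List (Formula P) → Formula P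
  | [] => Formula.impl Formula.bot Formula.bot
  | [φ] => φ
  | φ :: ψ :: rest => Formula.and φ (bigConj (ψ :: rest))

/-- Big disjunction (with ∨) of a list of formulas. -/
def bigDisj {P : Type} : List (Formula P) → Formula P
  | [] => Formula.bot
  | [φ] => φ
  | φ :: ψ :: rest => Formula.or φ (bigDisj (ψ :: rest))

/-- All ways of choosing, for each element `a` of the second list, a pair `(a,b)`
with `b` from the first list; these represent the functions f : R(φ) → R(ψ). -/
def selections {P : Type} (bs : List (Formula P)) :
    List (Formula P) → List (List (Formula P × Formula P))
  | [] => [[]]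
  | a :: rest => (selections bs rest).flatMap (fun s => bs.map (fun b => (a, b) :: s))

/-- The resolutions R(φ) of a formula φ. -/
def resolutions {P : Type} : Formula P → List (Formula P)
  | .atom p => [.atom p]
  | .bot => [.bot]
  | .and φ ψ => (resolutions φ).flatMap (fun a => (resolutions ψ).map (fun b => .and a b))
  | .or φ ψ => (resolutions φ).flatMap (fun a => (resolutions ψ).map (fun b => .or a b))
  | .impl φ ψ => (selections (resolutions ψ) (resolutions φ)).map
      (fun s => bigConj (s.map (fun ab => Formula.impl ab.1 ab.2)))
  | .iorr φ ψ => resolutions φ ++ resolutions ψ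

section Aux
open Formula

lemma upset_mono {P : Type} (M : KripkeModel P) {t t' : Set M.W} (h : t' ⊆ t) :
    M.upset t' ⊆ M.upset t := by
  rintro v ⟨w, hw, hr⟩; exact ⟨w, h hw, hr⟩

lemma subset_upset {P : Type} (M : KripkeModel P) (t : Set M.W) : t ⊆ M.upset t :=
  fun w hw => ⟨w, hw, M.refl w⟩

lemma support_mono {P : Type} (M : KripkeModel P) (φ : Formula P) :
    ∀ {t t' : Set M.W}, t' ⊆ t → support M φ t → support M φ t' := by
  induction φ with
  | atom p => intro t t' h hs w hw; exact hs w (h hw)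
  | bot => intro t t' h hs; subst hs; exact Set.subset_eq_empty h rfl
  | and φ ψ ihφ ihψ => intro t t' h hs; exact ⟨ihφ h hs.1, ihψ h hs.2⟩
  | or φ ψ ihφ ihψ =>
    rintro t t' h ⟨t₁, t₂, rfl, h1, h2⟩
    refine ⟨t' ∩ t₁, t' ∩ t₂, ?_, ihφ Set.inter_subset_right h1,
      ihψ Set.inter_subset_right h2⟩
    rw [← Set.inter_union_distrib_left, Set.inter_eq_left.mpr h]
  | impl φ ψ ihφ ihψ =>
    intro t t' h hs t'' ht'' hφ
    exact hs t'' (ht''.trans (upset_mono M h)) hφ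
  | iorr φ ψ ihφ ihψ =>
    rintro t t' h (hs | hs)
    · exact Or.inl (ihφ h hs)
    · exact Or.inr (ihψ h hs)

lemma standard_tc {P : Type} (φ : Formula P) (h : φ.standard) (M : KripkeModel P)
    (t : Set M.W) :
    support M φ t ↔ ∀ w ∈ t, support M φ {w} := by
  constructor
  · intro hs w hw; exact support_mono M φ (Set.singleton_subset_iff.mpr hw) hs
  · induction φ generalizing t with
    | atom p => intro hw w hwt; exact hw w hwt w rfl
    | bot =>
      intro hw
      show t = ∅
      rw [Set.eq_empty_iff_forall_notMem]
      intro w hwt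
      have h2 : ({w} : Set M.W) = ∅ := hw w hwt
      exact Set.singleton_ne_empty w h2
    | and φ ψ ihφ ihψ =>
      intro hw
      exact ⟨ihφ h.1 t (fun w hwt => (hw w hwt).1),
             ihψ h.2 t (fun w hwt => (hw w hwt).2)⟩
    | or φ ψ ihφ ihψ =>
      intro hw
      have key : ∀ w ∈ t, support M φ {w} ∨ support M ψ {w} := by
        intro w hwt
        obtain ⟨t₁, t₂, heq, h1, h2⟩ := hw w hwt
        have hw1 : w ∈ t₁ ∪ t₂ := heq ▸ rfl
        rcases hw1 with hw1 | hw1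
        · left
          have : ({w} : Set M.W) ⊆ t₁ := Set.singleton_subset_iff.mpr hw1
          exact support_mono M φ this h1
        · right
          have : ({w} : Set M.W) ⊆ t₂ := Set.singleton_subset_iff.mpr hw1
          exact support_mono M ψ this h2
      refine ⟨{w ∈ t | support M φ {w}}, {w ∈ t | support M ψ {w}}, ?_, ?_, ?_⟩
      · ext w
        simp only [Set.mem_union, Set.mem_setOf_eq]
        constructor
        · intro hwt; rcases key w hwt with hk | hk
          · exact Or.inl ⟨hwt, hk⟩
          · exact Or.inr ⟨hwt, hk⟩
        · rintro (⟨hwt, _⟩ | ⟨hwt, _⟩) <;> exact hwt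
      · exact ihφ h.1 _ (fun w hwt => hwt.2)
      · exact ihψ h.2 _ (fun w hwt => hwt.2)
    | impl φ ψ ihφ ihψ =>
      intro hw t' ht' hφ
      apply ihψ h.2 t'
      intro v hvt'
      obtain ⟨w, hwt, hr⟩ := ht' hvt'
      have := hw w hwt ({v}) ?_ ?_
      · exact this
      · intro x hx; rcases hx with rfl; exact ⟨w, rfl, hr⟩
      · exact support_mono M φ (Set.singleton_subset_iff.mpr hvt') hφ
    | iorr φ ψ _ _ => exact absurd h (by simp [Formula.standard])

lemma bigConj_support {P : Type} (M : KripkeModel P) :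
    ∀ (l : List (Formula P)) (t : Set M.W),
      support M (bigConj l) t ↔ ∀ χ ∈ l, support M χ t := by
  intro l
  induction l with
  | nil =>
    intro t
    simp only [bigConj, List.not_mem_nil, false_implies, implies_true, iff_true]
    intro t' _ h; exact h
  | cons φ rest ih =>
    cases rest with
    | nil => intro t; simp [bigConj]
    | cons ψ rest' =>
      intro t
      show support M φ t ∧ support M (bigConj (ψ :: rest')) t ↔ _
      rw [ih]
      simp only [List.mem_cons]
      constructor
      · rintro ⟨h1, h2⟩ χ (rfl | hχ)
        · exact h1
        · exact h2 χ hχ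
      · intro h
        exact ⟨h φ (Or.inl rfl), fun χ hχ => h χ (Or.inr hχ)⟩

lemma bigConj_standard {P : Type} :
    ∀ (l : List (Formula P)), (∀ χ ∈ l, χ.standard) → (bigConj l).standard := by
  intro l
  induction l with
  | nil => intro _; exact ⟨trivial, trivial⟩
  | cons φ rest ih =>
    cases rest with
    | nil => intro h; exact h φ (by simp)
    | cons ψ rest' =>
      intro h
      exact ⟨h φ (by simp), ih (fun χ hχ => h χ (List.mem_cons_of_mem _ hχ))⟩

lemma selections_snd {P : Type} (bs : List (Formula P)) :
    ∀ (as : List (Formula P)), ∀ s ∈ selections bs as, ∀ p ∈ s, p.2 ∈ bs := by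
  intro as
  induction as with
  | nil => intro s hs p hp; simp [selections] at hs; subst hs; simp at hp
  | cons a rest ih =>
    intro s hs p hp
    simp only [selections, List.mem_flatMap, List.mem_map] at hs
    obtain ⟨s', hs', b, hb, rfl⟩ := hs
    rcases List.mem_cons.mp hp with rfl | hp
    · exact hb
    · exact ih s' hs' p hp

lemma selections_cover {P : Type} (bs : List (Formula P)) :
    ∀ (as : List (Formula P)), ∀ s ∈ selections bs as, ∀ a ∈ as, ∃ b, (a, b) ∈ s := by
  intro as
  induction as with
  | nil => intro s _ a ha; simp at ha
  | cons a rest ih =>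
    intro s hs a' ha'
    simp only [selections, List.mem_flatMap, List.mem_map] at hs
    obtain ⟨s', hs', b, hb, rfl⟩ := hs
    rcases List.mem_cons.mp ha' with rfl | ha'
    · exact ⟨b, List.mem_cons_self⟩
    · obtain ⟨b', hb'⟩ := ih s' hs' a' ha'
      exact ⟨b', List.mem_cons_of_mem _ hb'⟩

lemma mem_selections_of_fun {P : Type} (bs : List (Formula P))
    (f : Formula P → Formula P) :
    ∀ (as : List (Formula P)), (∀ a ∈ as, f a ∈ bs) →
      as.map (fun a => (a, f a)) ∈ selections bs as := by
  intro as
  induction as with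
  | nil => intro _; simp [selections]
  | cons a rest ih =>
    intro hf
    simp only [List.map_cons, selections, List.mem_flatMap, List.mem_map]
    exact ⟨rest.map (fun a => (a, f a)), ih (fun a' ha' => hf a' (List.mem_cons_of_mem _ ha')),
      f a, hf a (List.mem_cons_self), rfl⟩

lemma resolutions_nonempty {P : Type} (φ : Formula P) : ∃ α, α ∈ resolutions φ := by
  induction φ with
  | atom p => exact ⟨.atom p, by simp [resolutions]⟩
  | bot => exact ⟨.bot, by simp [resolutions]⟩
  | and φ ψ ihφ ihψ =>
    obtain ⟨a, ha⟩ := ihφ; obtain ⟨b, hb⟩ := ihψ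
    refine ⟨.and a b, ?_⟩
    simp only [resolutions, List.mem_flatMap, List.mem_map]
    exact ⟨a, ha, b, hb, rfl⟩
  | or φ ψ ihφ ihψ =>
    obtain ⟨a, ha⟩ := ihφ; obtain ⟨b, hb⟩ := ihψ
    refine ⟨.or a b, ?_⟩
    simp only [resolutions, List.mem_flatMap, List.mem_map]
    exact ⟨a, ha, b, hb, rfl⟩
  | impl φ ψ ihφ ihψ =>
    obtain ⟨b, hb⟩ := ihψ
    have hs := mem_selections_of_fun (resolutions ψ) (fun _ => b) (resolutions φ)
      (fun _ _ => hb)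
    exact ⟨_, List.mem_map.mpr ⟨_, hs, rfl⟩⟩
  | iorr φ ψ ihφ ihψ =>
    obtain ⟨a, ha⟩ := ihφ
    exact ⟨a, by simp [resolutions, ha]⟩

lemma selections_fst {P : Type} (bs : List (Formula P)) :
    ∀ (as : List (Formula P)), ∀ s ∈ selections bs as, ∀ p ∈ s, p.1 ∈ as := by
  intro as
  induction as with
  | nil => intro s hs p hp; simp [selections] at hs; subst hs; simp at hp
  | cons a rest ih =>
    intro s hs p hp
    simp only [selections, List.mem_flatMap, List.mem_map] at hs
    obtain ⟨s', hs', b, hb, rfl⟩ := hs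
    rcases List.mem_cons.mp hp with rfl | hp
    · exact List.mem_cons_self
    · exact List.mem_cons_of_mem _ (ih s' hs' p hp)

lemma resolutions_standard {P : Type} (φ : Formula P) :
    ∀ α ∈ resolutions φ, α.standard := by
  induction φ with
  | atom p => intro α hα; simp [resolutions] at hα; subst hα; trivial
  | bot => intro α hα; simp [resolutions] at hα; subst hα; trivial
  | and φ ψ ihφ ihψ =>
    intro α hα
    simp only [resolutions, List.mem_flatMap, List.mem_map] at hα
    obtain ⟨a, ha, b, hb, rfl⟩ := hα
    exact ⟨ihφ a ha, ihψ b hb⟩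
  | or φ ψ ihφ ihψ =>
    intro α hα
    simp only [resolutions, List.mem_flatMap, List.mem_map] at hα
    obtain ⟨a, ha, b, hb, rfl⟩ := hα
    exact ⟨ihφ a ha, ihψ b hb⟩
  | impl φ ψ ihφ ihψ =>
    intro α hα
    simp only [resolutions, List.mem_map] at hα
    obtain ⟨s, hs, rfl⟩ := hα
    apply bigConj_standard
    intro χ hχ
    simp only [List.mem_map] at hχ
    obtain ⟨p, hp, rfl⟩ := hχ
    exact ⟨ihφ p.1 (selections_fst _ _ s hs p hp),
      ihψ p.2 (selections_snd _ _ s hs p hp)⟩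
  | iorr φ ψ ihφ ihψ =>
    intro α hα
    simp only [resolutions, List.mem_append] at hα
    rcases hα with hα | hα
    · exact ihφ α hα
    · exact ihψ α hα

end Aux

/-- inquisitive normal form: every formula is equivalent to the
inquisitive disjunction of its resolutions, i.e. a team supports φ iff it supports
some resolution of φ. -/
theorem inquisitive_normal_form {P : Type} (φ : Formula P) (M : KripkeModel P)
    (t : Set M.W) :
    support M φ t ↔ ∃ α ∈ resolutions φ, support M α t := by
  induction φ generalizing t with
  | atom p => simp [resolutions]
  | bot => simp [resolutions]
  | and φ ψ ihφ ihψ =>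
    constructor
    · rintro ⟨h1, h2⟩
      obtain ⟨a, ha, hsa⟩ := (ihφ t).mp h1
      obtain ⟨b, hb, hsb⟩ := (ihψ t).mp h2
      refine ⟨.and a b, ?_, ⟨hsa, hsb⟩⟩
      simp only [resolutions, List.mem_flatMap, List.mem_map]
      exact ⟨a, ha, b, hb, rfl⟩
    · rintro ⟨α, hα, hs⟩
      simp only [resolutions, List.mem_flatMap, List.mem_map] at hα
      obtain ⟨a, ha, b, hb, rfl⟩ := hα
      exact ⟨(ihφ t).mpr ⟨a, ha, hs.1⟩, (ihψ t).mpr ⟨b, hb, hs.2⟩⟩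
  | or φ ψ ihφ ihψ =>
    constructor
    · rintro ⟨t₁, t₂, rfl, h1, h2⟩
      obtain ⟨a, ha, hsa⟩ := (ihφ t₁).mp h1
      obtain ⟨b, hb, hsb⟩ := (ihψ t₂).mp h2
      refine ⟨.or a b, ?_, t₁, t₂, rfl, hsa, hsb⟩
      simp only [resolutions, List.mem_flatMap, List.mem_map]
      exact ⟨a, ha, b, hb, rfl⟩
    · rintro ⟨α, hα, hs⟩
      simp only [resolutions, List.mem_flatMap, List.mem_map] at hα
      obtain ⟨a, ha, b, hb, rfl⟩ := hα
      obtain ⟨t₁, t₂, rfl, h1, h2⟩ := hs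
      exact ⟨t₁, t₂, rfl, (ihφ t₁).mpr ⟨a, ha, h1⟩, (ihψ t₂).mpr ⟨b, hb, h2⟩⟩
  | impl φ ψ ihφ ihψ =>
    constructor
    · intro hs
      -- for each resolution a of φ, the team t_a of upset-points where a is true
      classical
      let T : Formula P → Set M.W := fun a => {v ∈ M.upset t | support M a {v}}
      have hTsub : ∀ a, T a ⊆ M.upset t := fun a v hv => hv.1
      have hTsupp : ∀ a ∈ resolutions φ, support M a (T a) := by
        intro a ha
        exact (standard_tc a (resolutions_standard φ a ha) M (T a)).mpr
          (fun w hw => hw.2)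
      have hψT : ∀ a ∈ resolutions φ, ∃ b ∈ resolutions ψ, support M b (T a) := by
        intro a ha
        exact (ihψ (T a)).mp (hs (T a) (hTsub a) ((ihφ (T a)).mpr ⟨a, ha, hTsupp a ha⟩))
      choose! f hf1 hf2 using hψT
      refine ⟨bigConj (((resolutions φ).map (fun a => (a, f a))).map
        (fun ab => Formula.impl ab.1 ab.2)), ?_, ?_⟩
      · simp only [resolutions, List.mem_map]
        exact ⟨_, mem_selections_of_fun _ f _ hf1, rfl⟩
      · rw [bigConj_support]
        intro χ hχ
        simp only [List.mem_map] at hχ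
        obtain ⟨p, hp, rfl⟩ := hχ
        obtain ⟨a, ha, rfl⟩ := hp
        intro t' ht' hsa
        apply support_mono M (f a) _ (hf2 a ha)
        intro v hv
        refine ⟨ht' hv, ?_⟩
        exact support_mono M a (Set.singleton_subset_iff.mpr hv) hsa
    · rintro ⟨α, hα, hsα⟩
      simp only [resolutions, List.mem_map] at hα
      obtain ⟨s, hsmem, rfl⟩ := hα
      rw [bigConj_support] at hsα
      intro t' ht' hφ'
      obtain ⟨a, ha, hsa⟩ := (ihφ t').mp hφ'
      obtain ⟨b, hab⟩ := selections_cover _ _ s hsmem a ha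
      have hb : b ∈ resolutions ψ := selections_snd _ _ s hsmem (a, b) hab
      have : support M (Formula.impl a b) t :=
        hsα _ (List.mem_map.mpr ⟨(a, b), hab, rfl⟩)
      exact (ihψ t').mpr ⟨b, hb, this t' ht' hsa⟩
  | iorr φ ψ ihφ ihψ =>
    simp only [resolutions, List.mem_append]
    constructor
    · rintro (h | h)
      · obtain ⟨a, ha, hs⟩ := (ihφ t).mp h; exact ⟨a, Or.inl ha, hs⟩
      · obtain ⟨b, hb, hs⟩ := (ihψ t).mp h; exact ⟨b, Or.inr hb, hs⟩
    · rintro ⟨α, (hα | hα), hs⟩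
      · exact Or.inl ((ihφ t).mpr ⟨α, hα, hs⟩)
      · exact Or.inr ((ihψ t).mpr ⟨α, hα, hs⟩)
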